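/- Let n ≥ 1 and let A be a real n×n matrix possessing the strong Perron–Frobenius property, and suppose A is diagonalizable over ℂ: there exist an invertible complex n×n matrix P and a function d : Fin n → ℂ such that (viewing A as a complex matrix) A = P · diag(d) · P⁻¹. Suppose further that there is a permutation σ of the index set with d(σ(i)) = conj(d(i)) for all i and conj(P(i,j)) = P(i,σ(j)) for all i,j. Let f : ℂ → ℂ satisfy: (a) conj(f(d(i))) = f(conj(d(i))) for every index i; (b) f(ρ(A)) is real and strictly positive; and (c) |f(d(i))| < f(ρ(A)) for every index i with d(i) ≠ ρ(A). Then there exists a real n×n matrix B whose entrywise coercion to ℂ equals P · diag(f ∘ d) · P⁻¹, and B possesses the strong Perron–Frobenius property. -/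

import Mathlib

open Polynomial Matrix

/-- The spectral radius of a real matrix: the maximum of the moduli of the complex
roots of its characteristic polynomial. -/
noncomputable def specRadius {n : ℕ} (A : Matrix (Fin n) (Fin n) ℝ) : ℝ :=
  (((A.charpoly.map (algebraMap ℝ ℂ)).roots.map (fun z => ‖z‖₊)).sup : NNReal)

/-- The strong Perron–Frobenius property for a real matrix. -/
def HasStrongPF {n : ℕ} (A : Matrix (Fin n) (Fin n) ℝ) : Prop :=
  0 < specRadius A ∧
  (A.charpoly.map (algebraMap ℝ ℂ)).rootMultiplicity (specRadius A : ℂ) = 1 ∧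
  (∃ x : Fin n → ℝ, (∀ i, 0 < x i) ∧ A.mulVec x = (specRadius A) • x) ∧
  (∀ μ ∈ (A.charpoly.map (algebraMap ℝ ℂ)).roots,
      μ ≠ (specRadius A : ℂ) → ‖μ‖ < specRadius A)

/-- Eventual positivity of a real matrix. -/
def EventuallyPos {n : ℕ} (A : Matrix (Fin n) (Fin n) ℝ) : Prop :=
  ∃ p : ℕ, ∀ k ≥ p, ∀ i j, 0 < (A ^ k) i j

lemma charpoly_diag_aux {n : ℕ} (d : Fin n → ℂ) :
    (Matrix.diagonal d).charpoly = ∏ i, (X - C (d i)) := by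
  rw [Matrix.charpoly, charmatrix, RingHom.mapMatrix_apply, scalar_apply,
    Matrix.diagonal_map (map_zero C), Matrix.diagonal_sub, Matrix.det_diagonal]

lemma charpoly_similar_aux {n : ℕ} (P D : Matrix (Fin n) (Fin n) ℂ) (hP : IsUnit P) :
    (P * D * P⁻¹).charpoly = D.charpoly := by
  have hd : IsUnit P.det := (Matrix.isUnit_iff_isUnit_det P).mp hP
  have h1 : P * P⁻¹ = 1 := Matrix.mul_nonsing_inv P hd
  set Pm := P.map C with hPm
  set Pm' := (P⁻¹).map C with hPm'
  have h2 : Pm * Pm' = 1 := by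
    rw [hPm, hPm', ← Matrix.map_mul, h1]; simp
  have key : charmatrix (P * D * P⁻¹) = Pm * charmatrix D * Pm' := by
    simp only [charmatrix, RingHom.mapMatrix_apply]
    rw [mul_sub, sub_mul]
    congr 1
    · have hc : Pm * scalar (Fin n) X = scalar (Fin n) X * Pm :=
        (Matrix.scalar_commute X (fun r' => Commute.all X r') Pm).symm
      rw [hc, mul_assoc, h2, mul_one]
    · simp [hPm, hPm', Matrix.map_mul]
  have hdet : Pm.det * Pm'.det = 1 := by rw [← Matrix.det_mul, h2, Matrix.det_one]
  rw [Matrix.charpoly, key, Matrix.det_mul, Matrix.det_mul, Matrix.charpoly]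
  calc Pm.det * D.charmatrix.det * Pm'.det
      = (Pm.det * Pm'.det) * D.charmatrix.det := by ring
    _ = D.charmatrix.det := by rw [hdet, one_mul]

lemma roots_prod_X_sub_C_aux {n : ℕ} (d : Fin n → ℂ) :
    (∏ i, (X - C (d i))).roots = Multiset.map d Finset.univ.val := by
  rw [Finset.prod_eq_multiset_prod]
  have h : (fun i => X - C (d i)) = (fun a : ℂ => X - C a) ∘ d := rfl
  rw [h, ← Multiset.map_map]
  exact roots_multiset_prod_X_sub_C _

/-- Frobenius functions preserve the strong Perron–Frobenius property for
diagonalizable matrices (Theorem 4.3, diagonalizable case). -/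
theorem strongPF_of_frobenius_diagonalizable {n : ℕ} (hn : 1 ≤ n)
    (A : Matrix (Fin n) (Fin n) ℝ) (hA : HasStrongPF A)
    (P : Matrix (Fin n) (Fin n) ℂ) (hP : IsUnit P) (d : Fin n → ℂ)
    (hdiag : A.map Complex.ofReal = P * Matrix.diagonal d * P⁻¹)
    (σ : Equiv.Perm (Fin n))
    (hdσ : ∀ i, d (σ i) = starRingEnd ℂ (d i))
    (hPσ : ∀ i j, starRingEnd ℂ (P i j) = P i (σ j))
    (f : ℂ → ℂ)
    (hconj : ∀ i, starRingEnd ℂ (f (d i)) = f (starRingEnd ℂ (d i)))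
    (hreal : (f (specRadius A)).im = 0)
    (hpos : 0 < (f (specRadius A)).re)
    (hmod : ∀ i, d i ≠ (specRadius A : ℂ) →
      ‖f (d i)‖ < (f (specRadius A)).re) :
    ∃ B : Matrix (Fin n) (Fin n) ℝ,
      B.map Complex.ofReal = P * Matrix.diagonal (fun i => f (d i)) * P⁻¹ ∧
      HasStrongPF B := by
  classical
  set ρ : ℝ := specRadius A with hρ
  set F : Fin n → ℂ := fun i => f (d i) with hF
  set M : Matrix (Fin n) (Fin n) ℂ := P * Matrix.diagonal F * P⁻¹ with hM
  have hPdet : IsUnit P.det := (Matrix.isUnit_iff_isUnit_det P).mp hP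
  have hPP : P * P⁻¹ = 1 := Matrix.mul_nonsing_inv P hPdet
  have hPP' : P⁻¹ * P = 1 := Matrix.nonsing_inv_mul P hPdet
  -- characteristic polynomial of A over ℂ
  have hchA : A.charpoly.map (algebraMap ℝ ℂ) = ∏ i, (X - C (d i)) := by
    rw [← Matrix.charpoly_map A (algebraMap ℝ ℂ)]
    have : A.map (algebraMap ℝ ℂ) = A.map Complex.ofReal := rfl
    rw [this, hdiag, charpoly_similar_aux _ _ hP, charpoly_diag_aux]
  have hrootsA : (A.charpoly.map (algebraMap ℝ ℂ)).roots = Multiset.map d Finset.univ.val := by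
    rw [hchA, roots_prod_X_sub_C_aux]
  -- ρ is one of the d i
  have hchA_ne : A.charpoly.map (algebraMap ℝ ℂ) ≠ 0 :=
    ((A.charpoly_monic).map _).ne_zero
  have hcount : (Multiset.map d Finset.univ.val).count ((ρ : ℂ)) = 1 := by
    have := Polynomial.count_roots (A.charpoly.map (algebraMap ℝ ℂ)) (a := (ρ : ℂ))
    rw [hrootsA] at this
    rw [this, hA.2.1]
  have hρmem : ((ρ : ℂ)) ∈ Multiset.map d Finset.univ.val := by
    rw [← Multiset.count_pos, hcount]; norm_num
  obtain ⟨i₀, -, hi₀⟩ := Multiset.mem_map.mp hρmem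
  -- realness of M
  have hconjP : P.map (starRingEnd ℂ) = P.submatrix id σ := by
    ext i j; simp [Matrix.map_apply, Matrix.submatrix_apply, hPσ]
  have hS1 : (P.submatrix id σ) * (P⁻¹.submatrix σ id) = 1 := by
    ext i j
    rw [Matrix.mul_apply]
    simp only [Matrix.submatrix_apply, id_eq]
    rw [Equiv.sum_comp σ (fun m => P i m * P⁻¹ m j)]
    rw [← Matrix.mul_apply, hPP]
  have hS2 : (P.submatrix id σ) * ((P⁻¹).map (starRingEnd ℂ)) = 1 := by
    rw [← hconjP, ← Matrix.map_mul, hPP, Matrix.map_one _ (map_zero _) (map_one _)]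
  have hPinvconj : (P⁻¹).map (starRingEnd ℂ) = P⁻¹.submatrix σ id := by
    rw [← Matrix.inv_eq_right_inv hS2, Matrix.inv_eq_right_inv hS1]
  have hFσ : ∀ k, starRingEnd ℂ (F k) = F (σ k) := by
    intro k
    rw [hF]
    simp only
    rw [hconj k, ← hdσ k]
  have hMreal : ∀ i j, starRingEnd ℂ (M i j) = M i j := by
    intro i j
    have hMij : M i j = ∑ k, P i k * F k * P⁻¹ k j := by
      rw [hM, Matrix.mul_apply]
      refine Finset.sum_congr rfl fun k _ => ?_
      rw [Matrix.mul_diagonal]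
    rw [hMij, map_sum]
    have : ∀ k, starRingEnd ℂ (P i k * F k * P⁻¹ k j)
        = P i (σ k) * F (σ k) * P⁻¹ (σ k) j := by
      intro k
      rw [_root_.map_mul, _root_.map_mul, hPσ, hFσ]
      congr 1
      have := congrFun (congrFun hPinvconj k) j
      simpa [Matrix.map_apply, Matrix.submatrix_apply] using this
    simp_rw [this]
    rw [Equiv.sum_comp σ (fun m => P i m * F m * P⁻¹ m j)]
  -- define B
  set B : Matrix (Fin n) (Fin n) ℝ := Matrix.of (fun i j => (M i j).re) with hB
  have hBmap : B.map Complex.ofReal = M := by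
    ext i j
    simp only [Matrix.map_apply, hB, Matrix.of_apply]
    have him : (M i j).im = 0 := by
      have := hMreal i j
      rw [Complex.conj_eq_iff_im] at this
      exact this
    exact Complex.ext (by simp) (by simp [him])
  refine ⟨B, hBmap, ?_⟩
  -- characteristic polynomial of B
  have hchB : B.charpoly.map (algebraMap ℝ ℂ) = ∏ i, (X - C (F i)) := by
    rw [← Matrix.charpoly_map B (algebraMap ℝ ℂ)]
    have : B.map (algebraMap ℝ ℂ) = B.map Complex.ofReal := rfl
    rw [this, hBmap, hM, charpoly_similar_aux _ _ hP, charpoly_diag_aux]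
  have hrootsB : (B.charpoly.map (algebraMap ℝ ℂ)).roots = Multiset.map F Finset.univ.val := by
    rw [hchB, roots_prod_X_sub_C_aux]
  set r : ℝ := (f (ρ : ℂ)).re with hr
  have hfρ : f ((ρ : ℂ)) = (r : ℂ) := Complex.ext (by simp [hr]) (by simpa using hreal)
  have hFi₀ : F i₀ = (r : ℂ) := by rw [hF]; simp only; rw [hi₀, hfρ]
  have habs_le : ∀ i, ‖F i‖ ≤ r := by
    intro i
    by_cases h : d i = (ρ : ℂ)
    · have : F i = (r : ℂ) := by rw [hF]; simp only; rw [h, hfρ]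
      rw [this]
      simp [Complex.norm_real, Real.norm_eq_abs, abs_of_pos hpos]
    · exact le_of_lt (hmod i h)
  -- spectral radius of B equals r
  have hrnn : (0 : ℝ) ≤ r := le_of_lt hpos
  have hspecB : specRadius B = r := by
    rw [specRadius, hrootsB]
    have : ((Multiset.map F Finset.univ.val).map fun z => ‖z‖₊).sup = NNReal.mk r hrnn := by
      apply le_antisymm
      · rw [Multiset.sup_le]
        intro a ha
        rw [Multiset.mem_map] at ha
        obtain ⟨z, hz, rfl⟩ := ha
        rw [Multiset.mem_map] at hz
        obtain ⟨i, -, rfl⟩ := hz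
        rw [← NNReal.coe_le_coe]
        simpa [coe_nnnorm] using habs_le i
      · apply Multiset.le_sup
        rw [Multiset.mem_map]
        refine ⟨F i₀, Multiset.mem_map_of_mem F (Finset.mem_univ i₀), ?_⟩
        rw [hFi₀]
        ext
        simp [coe_nnnorm, Complex.norm_real, Real.norm_eq_abs, abs_of_nonneg hrnn]
    rw [this]
    rfl
  constructor
  · rw [hspecB]; exact hpos
  have hrC : ((specRadius B : ℝ) : ℂ) = (r : ℂ) := by rw [hspecB]
  constructor
  · -- root multiplicity 1
    have hchB_ne : B.charpoly.map (algebraMap ℝ ℂ) ≠ 0 := ((B.charpoly_monic).map _).ne_zero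
    rw [← Polynomial.count_roots, hrootsB, hrC]
    have hiff : ∀ i : Fin n, ((r : ℂ) = F i) ↔ ((ρ : ℂ) = d i) := by
      intro i
      constructor
      · intro h
        by_contra hne
        have h1 : ‖F i‖ < r := hmod i (fun hh => hne hh.symm)
        rw [← h] at h1
        simp [Complex.norm_real, Real.norm_eq_abs, abs_of_pos hpos] at h1
      · intro h
        rw [hF]; simp only; rw [← h, hfρ]
    calc (Multiset.map F Finset.univ.val).count (r : ℂ)
        = Multiset.card (Finset.univ.val.filter (fun i => (r : ℂ) = F i)) := by
          rw [Multiset.count_map]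
      _ = Multiset.card (Finset.univ.val.filter (fun i => (ρ : ℂ) = d i)) := by
          congr 1
          exact Multiset.filter_congr (fun i _ => hiff i)
      _ = (Multiset.map d Finset.univ.val).count (ρ : ℂ) := by
          rw [Multiset.count_map]
      _ = 1 := hcount
  constructor
  · -- positive eigenvector
    obtain ⟨x, hxpos, hxA⟩ := hA.2.2.1
    set xc : Fin n → ℂ := fun i => (x i : ℂ) with hxc
    have hxcA : (A.map Complex.ofReal).mulVec xc = (ρ : ℂ) • xc := by
      funext i
      have := congrFun hxA i
      simp only [Matrix.mulVec, dotProduct, Pi.smul_apply, smul_eq_mul] at this ⊢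
      simp only [Matrix.map_apply, hxc]
      push_cast
      rw [← Complex.ofReal_mul, ← this]
      push_cast
      rfl
    set y : Fin n → ℂ := P⁻¹.mulVec xc with hy
    have hdy : (Matrix.diagonal d).mulVec y = (ρ : ℂ) • y := by
      have h1 : (P⁻¹ * (P * Matrix.diagonal d * P⁻¹)) = Matrix.diagonal d * P⁻¹ := by
        rw [← mul_assoc, ← mul_assoc, hPP', one_mul]
      calc (Matrix.diagonal d).mulVec y
          = ((Matrix.diagonal d) * P⁻¹).mulVec xc := by rw [hy, Matrix.mulVec_mulVec]
        _ = (P⁻¹ * (P * Matrix.diagonal d * P⁻¹)).mulVec xc := by rw [h1]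
        _ = P⁻¹.mulVec ((A.map Complex.ofReal).mulVec xc) := by
            rw [hdiag, Matrix.mulVec_mulVec]
        _ = P⁻¹.mulVec ((ρ : ℂ) • xc) := by rw [hxcA]
        _ = (ρ : ℂ) • y := by rw [Matrix.mulVec_smul, hy]
    have hFy : (Matrix.diagonal F).mulVec y = f ((ρ : ℂ)) • y := by
      funext k
      rw [Matrix.mulVec_diagonal]
      by_cases hk : y k = 0
      · simp [hk]
      · have := congrFun hdy k
        rw [Matrix.mulVec_diagonal] at this
        simp only [Pi.smul_apply, smul_eq_mul] at this
        have hdk : d k = (ρ : ℂ) := by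
          have h2 : (d k - (ρ : ℂ)) * y k = 0 := by rw [sub_mul, this, sub_self]
          rcases mul_eq_zero.mp h2 with h | h
          · exact sub_eq_zero.mp h
          · exact absurd h hk
        simp only [Pi.smul_apply, smul_eq_mul, hF]
        rw [hdk]
    have hMx : M.mulVec xc = f ((ρ : ℂ)) • xc := by
      calc M.mulVec xc
          = P.mulVec ((Matrix.diagonal F).mulVec y) := by
            rw [hM, hy, Matrix.mulVec_mulVec, Matrix.mulVec_mulVec, mul_assoc]
        _ = P.mulVec (f ((ρ : ℂ)) • y) := by rw [hFy]
        _ = f ((ρ : ℂ)) • (P.mulVec y) := by rw [Matrix.mulVec_smul]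
        _ = f ((ρ : ℂ)) • ((P * P⁻¹).mulVec xc) := by rw [hy, Matrix.mulVec_mulVec]
        _ = f ((ρ : ℂ)) • xc := by rw [hPP, Matrix.one_mulVec]
    refine ⟨x, hxpos, ?_⟩
    funext i
    apply Complex.ofReal_injective
    have h1 : ((B.mulVec x i : ℝ) : ℂ) = M.mulVec xc i := by
      rw [← hBmap]
      simp only [Matrix.mulVec, dotProduct, Matrix.map_apply, hxc]
      push_cast
      rfl
    rw [h1, hMx]
    simp only [Pi.smul_apply, smul_eq_mul, hxc, hfρ]
    rw [hspecB]
    push_cast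
    ring
  · -- other roots strictly smaller
    intro μ hμ hμne
    rw [hrootsB] at hμ
    obtain ⟨i, -, rfl⟩ := Multiset.mem_map.mp hμ
    rw [hspecB]
    by_cases h : d i = (ρ : ℂ)
    · exfalso
      apply hμne
      rw [hrC, hF]; simp only; rw [h, hfρ]
    · exact hmod i h
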